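/- For each j ∈ J and f ∈ H one has v_j Λ_j π_{W_j} f = Σ_{k∈K_j} ⟨f, u_{j,k}⟩ e_{j,k}, Σ_{k∈K_j} |⟨f, u_{j,k}⟩|² ≤ v_j² ‖Λ_j‖² ‖f‖² (so {u_{j,k}}_{k∈K_j} is a Bessel sequence in H), and v_j π_{W_j} Λ_j* g = Σ_{k∈K_j} ⟨g, e_{j,k}⟩ u_{j,k} for every g ∈ H_j. -/

import Mathlib

open scoped InnerProductSpace
open ContinuousLinearMap

/-- The orthogonal projection of `H` onto the closed subspace `W j`, as a map `H →L[ℂ] H`. -/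
noncomputable def gfProj {H : Type*} [NormedAddCommGroup H] [InnerProductSpace ℂ H]
    {J : Type*} (W : J → Submodule ℂ H) [∀ j, CompleteSpace (W j)] (j : J) : H →L[ℂ] H :=
  (W j).subtypeL.comp ((W j).orthogonalProjectionOnto)

/-- with `u_{j,k} := v_j π_{W_j} Λ_j* e_{j,k}` (the sequence induced by `Λ`),
one has `v_j Λ_j π_{W_j} f = Σ_k ⟨f, u_{j,k}⟩ e_{j,k}`,
`Σ_k |⟨f, u_{j,k}⟩|² ≤ v_j² ‖Λ_j‖² ‖f‖²`, and
`v_j π_{W_j} Λ_j* g = Σ_k ⟨g, e_{j,k}⟩ u_{j,k}` for every `g ∈ H_j`. -/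
theorem gf_induced_sequence_basic_identities
    {H : Type*} [NormedAddCommGroup H] [InnerProductSpace ℂ H] [CompleteSpace H]
    {J : Type*} [Countable J]
    {Hs : J → Type*} [∀ j, NormedAddCommGroup (Hs j)] [∀ j, InnerProductSpace ℂ (Hs j)]
    [∀ j, CompleteSpace (Hs j)]
    (W : J → Submodule ℂ H) [∀ j, CompleteSpace (W j)]
    (v : J → ℝ) (hv : ∀ j, 0 < v j)
    (Λ : ∀ j, H →L[ℂ] Hs j)
    (K : J → Type*) [∀ j, Countable (K j)]
    (e : ∀ j, HilbertBasis (K j) ℂ (Hs j))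
    (u : ∀ j, K j → H)
    (hu : ∀ j k, u j k = v j • gfProj W j (adjoint (Λ j) (e j k))) :
    (∀ (j : J) (f : H),
        HasSum (fun k : K j => ⟪u j k, f⟫_ℂ • e j k) (v j • Λ j (gfProj W j f))) ∧
    (∀ (j : J) (f : H),
        Summable (fun k : K j => ‖⟪u j k, f⟫_ℂ‖ ^ 2) ∧
        ∑' k : K j, ‖⟪u j k, f⟫_ℂ‖ ^ 2 ≤ (v j) ^ 2 * ‖Λ j‖ ^ 2 * ‖f‖ ^ 2) ∧
    (∀ (j : J) (g : Hs j),
        HasSum (fun k : K j => ⟪e j k, g⟫_ℂ • u j k)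
          (v j • gfProj W j (adjoint (Λ j) g))) := by
  have key : ∀ (j : J) (f : H) (k : K j),
      ⟪u j k, f⟫_ℂ = ⟪e j k, (v j : ℂ) • Λ j (gfProj W j f)⟫_ℂ := by
    intro j f k
    rw [hu, ← Complex.coe_smul, inner_smul_left, inner_smul_right]
    simp only [Complex.conj_ofReal]
    congr 1
    simp only [gfProj, ContinuousLinearMap.comp_apply, Submodule.subtypeL_apply]
    rw [← Submodule.starProjection_apply, ← Submodule.starProjection_apply,
      Submodule.inner_starProjection_left_eq_right, adjoint_inner_left]
  have hproj : ∀ (j : J) (f : H), ‖gfProj W j f‖ ≤ ‖f‖ := by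
    intro j f
    have : ‖gfProj W j f‖ = ‖(W j).orthogonalProjectionOnto f‖ := rfl
    rw [this]
    calc ‖(W j).orthogonalProjectionOnto f‖ ≤ ‖(W j).orthogonalProjectionOnto‖ * ‖f‖ :=
          ((W j).orthogonalProjectionOnto).le_opNorm f
      _ ≤ 1 * ‖f‖ := by
          have := (W j).orthogonalProjectionOnto_norm_le
          nlinarith [norm_nonneg f]
      _ = ‖f‖ := one_mul _
  have hnorm : ∀ (j : J) (f : H), ‖(v j : ℂ) • Λ j (gfProj W j f)‖ ≤ v j * (‖Λ j‖ * ‖f‖) := by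
    intro j f
    rw [norm_smul, Complex.norm_real, Real.norm_of_nonneg (hv j).le]
    refine mul_le_mul_of_nonneg_left ?_ (hv j).le
    exact ((Λ j).le_opNorm _).trans
      (mul_le_mul_of_nonneg_left (hproj j f) (norm_nonneg _))
  have hsmul : ∀ (j : J) (x : Hs j), (v j : ℂ) • x = v j • x := fun j x => by
    simp [Complex.coe_smul]
  refine ⟨?_, ?_, ?_⟩
  · intro j f
    have h := (e j).hasSum_repr ((v j : ℂ) • Λ j (gfProj W j f))
    rw [hsmul] at h
    refine h.congr_fun fun k => ?_
    rw [(e j).repr_apply_apply, ← hsmul, ← key]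
  · intro j f
    constructor
    · refine ((e j).orthonormal.inner_products_summable
        ((v j : ℂ) • Λ j (gfProj W j f))).congr fun k => ?_
      rw [key]
    · calc ∑' k : K j, ‖⟪u j k, f⟫_ℂ‖ ^ 2
          = ∑' k : K j, ‖⟪e j k, (v j : ℂ) • Λ j (gfProj W j f)⟫_ℂ‖ ^ 2 := by
            exact tsum_congr fun k => by rw [key]
        _ ≤ ‖(v j : ℂ) • Λ j (gfProj W j f)‖ ^ 2 :=
            (e j).orthonormal.tsum_inner_products_le _
        _ ≤ (v j * (‖Λ j‖ * ‖f‖)) ^ 2 := by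
            have := hnorm j f
            nlinarith [norm_nonneg ((v j : ℂ) • Λ j (gfProj W j f))]
        _ = (v j) ^ 2 * ‖Λ j‖ ^ 2 * ‖f‖ ^ 2 := by ring
  · intro j g
    set T : Hs j →L[ℂ] H := (v j : ℂ) • ((gfProj W j).comp (adjoint (Λ j))) with hT
    have h := ((e j).hasSum_repr g).mapL T
    have hTg : T g = v j • gfProj W j (adjoint (Λ j) g) := by
      simp only [hT, ContinuousLinearMap.smul_apply, ContinuousLinearMap.comp_apply]
      simp [Complex.coe_smul]
    rw [hTg] at h
    refine h.congr_fun fun k => ?_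
    rw [(e j).repr_apply_apply, map_smul, hu]
    congr 1
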